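/- If a profile â* is a PSNE of a finite game Ĝ with robustness margin μ(â*) > 0, and a game G satisfies ‖G − Ĝ‖ ≤ μ(â*)·√(min_i h_i) in the weighted game norm ‖G‖² = Σ_i h_i Σ_a J_i(a)², then ‖J_i − Ĵ_i‖_∞ ≤ μ(â*) for every player i, and consequently â* is a PSNE of G. -/
import Mathlib


/-- a weighted-game-norm bound ‖G − Ĝ‖ ≤ μ·√(min_i h_i) implies a
sup-norm bound ‖J_i − Ĵ_i‖_∞ ≤ μ for every player, and consequently the PSNE
â* of Ĝ (with robustness margin μ > 0) remains a PSNE of G. -/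
theorem norm_bound_preserves_PSNE
    {N : Type} [Fintype N] [Nonempty N] [DecidableEq N]
    (A : N → Type) [∀ i, Fintype (A i)] [∀ i, DecidableEq (A i)]
    (hcard : ∀ i, 2 ≤ Fintype.card (A i))
    (J Jhat : N → (∀ i, A i) → ℝ)
    (astar : ∀ i, A i)
    (hNE : ∀ (i : N) (b : A i), Jhat i astar ≤ Jhat i (Function.update astar i b))
    (μ : ℝ)
    (hμ : μ = (1 / 2) * Finset.univ.inf' Finset.univ_nonempty (fun i =>
      (Finset.univ.filter (fun b : A i => b ≠ astar i)).inf'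
        (by
          obtain ⟨b, hb⟩ := Fintype.exists_ne_of_one_lt_card (hcard i) (astar i)
          exact ⟨b, Finset.mem_filter.mpr ⟨Finset.mem_univ b, hb⟩⟩)
        (fun b => Jhat i (Function.update astar i b) - Jhat i astar)))
    (hμpos : 0 < μ)
    (hnorm : Real.sqrt (∑ i : N,
        (Fintype.card (A i) : ℝ) * ∑ a : ∀ i, A i, (J i a - Jhat i a) ^ 2)
      ≤ μ * Real.sqrt (Finset.univ.inf' Finset.univ_nonempty
          (fun i : N => (Fintype.card (A i) : ℝ)))) :
    (∀ (i : N) (a : ∀ i, A i), |J i a - Jhat i a| ≤ μ) ∧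
    (∀ (i : N) (b : A i), J i astar ≤ J i (Function.update astar i b)) := by
  -- abbreviations
  set S : ℝ := ∑ i : N, (Fintype.card (A i) : ℝ) * ∑ a : ∀ i, A i, (J i a - Jhat i a) ^ 2 with hS
  have hSnn : 0 ≤ S := Finset.sum_nonneg fun i _ => mul_nonneg (Nat.cast_nonneg _)
    (Finset.sum_nonneg fun a _ => sq_nonneg _)
  set m : ℝ := Finset.univ.inf' Finset.univ_nonempty (fun i : N => (Fintype.card (A i) : ℝ)) with hm
  have hmle : ∀ i : N, m ≤ (Fintype.card (A i) : ℝ) := fun i =>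
    Finset.inf'_le _ (Finset.mem_univ i)
  have hmnn : 0 ≤ m := by
    exact Finset.le_inf' _ _ (fun j _ => Nat.cast_nonneg _)
  -- square the norm bound: S ≤ μ^2 * m
  have hSle : S ≤ μ ^ 2 * m := by
    have h1 : Real.sqrt S ≤ μ * Real.sqrt m := hnorm
    have h2 : (Real.sqrt S) ^ 2 ≤ (μ * Real.sqrt m) ^ 2 := by
      apply pow_le_pow_left₀ (Real.sqrt_nonneg _) h1
    rwa [Real.sq_sqrt hSnn, mul_pow, Real.sq_sqrt hmnn] at h2
  -- sup bound
  have hsup : ∀ (i : N) (a : ∀ i, A i), |J i a - Jhat i a| ≤ μ := by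
    intro i a
    have hterm : (Fintype.card (A i) : ℝ) * (J i a - Jhat i a) ^ 2 ≤ S := by
      refine le_trans ?_ (Finset.single_le_sum (f := fun i : N =>
        (Fintype.card (A i) : ℝ) * ∑ a : ∀ i, A i, (J i a - Jhat i a) ^ 2)
        (fun j _ => mul_nonneg (Nat.cast_nonneg _) (Finset.sum_nonneg fun a _ => sq_nonneg _))
        (Finset.mem_univ i))
      refine mul_le_mul_of_nonneg_left ?_ (Nat.cast_nonneg _)
      exact Finset.single_le_sum (f := fun a : ∀ i, A i => (J i a - Jhat i a) ^ 2)
        (fun a _ => sq_nonneg _) (Finset.mem_univ a)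
    have hcardpos : (0:ℝ) < (Fintype.card (A i) : ℝ) := by
      have := hcard i; positivity
    have hsq : (J i a - Jhat i a) ^ 2 ≤ μ ^ 2 := by
      have h3 : (Fintype.card (A i) : ℝ) * (J i a - Jhat i a) ^ 2
          ≤ μ ^ 2 * (Fintype.card (A i) : ℝ) := by
        calc (Fintype.card (A i) : ℝ) * (J i a - Jhat i a) ^ 2 ≤ S := hterm
        _ ≤ μ ^ 2 * m := hSle
        _ ≤ μ ^ 2 * (Fintype.card (A i) : ℝ) :=
          mul_le_mul_of_nonneg_left (hmle i) (sq_nonneg _)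
      nlinarith
    have h5 := Real.sqrt_le_sqrt hsq
    rwa [Real.sqrt_sq_eq_abs, Real.sqrt_sq hμpos.le] at h5
  refine ⟨hsup, ?_⟩
  intro i b
  by_cases hb : b = astar i
  · subst hb; rw [Function.update_eq_self]
  · -- margin: Jhat i (update) - Jhat i astar ≥ 2μ
    have hmargin : 2 * μ ≤ Jhat i (Function.update astar i b) - Jhat i astar := by
      have houter := Finset.inf'_le (b := i) (f := fun i =>
        (Finset.univ.filter (fun b : A i => b ≠ astar i)).inf'
          (by
            obtain ⟨b, hb⟩ := Fintype.exists_ne_of_one_lt_card (hcard i) (astar i)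
            exact ⟨b, Finset.mem_filter.mpr ⟨Finset.mem_univ b, hb⟩⟩)
          (fun b => Jhat i (Function.update astar i b) - Jhat i astar))
        (Finset.mem_univ i)
      have hinner := Finset.inf'_le (b := b)
        (s := Finset.univ.filter (fun b : A i => b ≠ astar i))
        (f := fun b : A i => Jhat i (Function.update astar i b) - Jhat i astar)
        (Finset.mem_filter.mpr ⟨Finset.mem_univ b, hb⟩)
      rw [hμ]
      linarith
    have h1 := hsup i astar
    have h2 := hsup i (Function.update astar i b)
    have h3 := abs_le.mp h1
    have h4 := abs_le.mp h2
    linarith [h3.1, h3.2, h4.1, h4.2]
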